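/- The set { f ∈ H_+([0,1]) : Fix(f) is totally disconnected } is a G_δ subset of H_+([0,1]) with the topology of uniform convergence. -/
import Mathlib


open MeasureTheory Set

/-- `f : ℝ → ℝ` is absolutely continuous on the interval `[a,b]`. -/
def ACOn (f : ℝ → ℝ) (a b : ℝ) : Prop :=
  ∀ ε > (0:ℝ), ∃ δ > (0:ℝ), ∀ n : ℕ, ∀ u v : Fin n → ℝ,
    (∀ i, a ≤ u i ∧ u i ≤ v i ∧ v i ≤ b) →
    (∀ i j, i ≠ j → Disjoint (Ioo (u i) (v i)) (Ioo (u j) (v j))) →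
    (∑ i, (v i - u i)) ≤ δ →
    (∑ i, |f (v i) - f (u i)|) ≤ ε

/-- The group `H₊([a,b])` of increasing self-homeomorphisms of `[a,b]`, encoded as the
set of permutations of `ℝ` which fix the complement of `[a,b]` pointwise, are strictly
increasing on `[a,b]`, and map `[a,b]` into (hence onto) itself continuously. -/
def Hplus (a b : ℝ) : Set (Equiv.Perm ℝ) :=
  {f | (∀ x, x ∉ Icc a b → f x = x) ∧ StrictMonoOn f (Icc a b) ∧
       MapsTo f (Icc a b) (Icc a b) ∧ ContinuousOn f (Icc a b)}

/-- The group `H₊^AC([a,b])`: those `f ∈ H₊([a,b])` with both `f` and `f⁻¹`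
absolutely continuous on `[a,b]`. -/
def Hac (a b : ℝ) : Set (Equiv.Perm ℝ) :=
  {f | f ∈ Hplus a b ∧ ACOn f a b ∧ ACOn f.symm a b}

/-- The metric `ρ(f,g) = ∫_a^b |f' - g'| dλ` on `H₊^AC([a,b])`. -/
noncomputable def rho (a b : ℝ) (f g : Equiv.Perm ℝ) : ℝ :=
  ∫ x in Ioo a b, |deriv (⇑f) x - deriv (⇑g) x|

/-- The topology on `H₊^AC([a,b])` induced by the metric `ρ`. -/
noncomputable def rhoTop (a b : ℝ) : TopologicalSpace ↥(Hac a b) :=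
  TopologicalSpace.generateFrom
    {U | ∃ f : ↥(Hac a b), ∃ ε : ℝ, 0 < ε ∧
      U = {g : ↥(Hac a b) | rho a b (f : Equiv.Perm ℝ) (g : Equiv.Perm ℝ) < ε}}

/-- The fixed-point set of `f`, within `[0,1]`. -/
def fixSet (f : Equiv.Perm ℝ) : Set ℝ := {x | x ∈ Icc (0:ℝ) 1 ∧ f x = x}

noncomputable instance : TopologicalSpace ↥(Hac 0 1) := rhoTop 0 1

/-- The supremum distance on `[0,1]`. -/
noncomputable def unifDist (f g : Equiv.Perm ℝ) : ℝ :=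
  ⨆ x : Icc (0:ℝ) 1, |f x - g x|

/-- The topology of uniform convergence on `H₊([0,1])`. -/
noncomputable def unifTop : TopologicalSpace ↥(Hplus 0 1) :=
  TopologicalSpace.generateFrom
    {U | ∃ f : ↥(Hplus 0 1), ∃ ε : ℝ, 0 < ε ∧
      U = {g : ↥(Hplus 0 1) | unifDist (f : Equiv.Perm ℝ) (g : Equiv.Perm ℝ) < ε}}

noncomputable instance : TopologicalSpace ↥(Hplus 0 1) := unifTop

/-- In `H₊([0,1])` with the topology of uniform convergence,
the set of homeomorphisms with totally disconnected fixed-point set is `G_δ`. -/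
lemma abs_sub_le_unifDist (f g : ↥(Hplus 0 1)) {x : ℝ} (hx : x ∈ Icc (0:ℝ) 1) :
    |(f : Equiv.Perm ℝ) x - (g : Equiv.Perm ℝ) x| ≤
      unifDist (f : Equiv.Perm ℝ) (g : Equiv.Perm ℝ) := by
  have hb : BddAbove (Set.range fun y : Icc (0:ℝ) 1 =>
      |(f : Equiv.Perm ℝ) y - (g : Equiv.Perm ℝ) y|) := by
    refine ⟨2, ?_⟩
    rintro r ⟨y, rfl⟩
    have hf := f.2.2.2.1 y.2
    have hg := g.2.2.2.1 y.2
    have h1 : |(f : Equiv.Perm ℝ) y| ≤ 1 := abs_le.mpr ⟨by linarith [hf.1], hf.2⟩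
    have h2 : |(g : Equiv.Perm ℝ) y| ≤ 1 := abs_le.mpr ⟨by linarith [hg.1], hg.2⟩
    calc |(f : Equiv.Perm ℝ) y - (g : Equiv.Perm ℝ) y|
        ≤ |(f : Equiv.Perm ℝ) y| + |(g : Equiv.Perm ℝ) y| := abs_sub _ _
      _ ≤ 2 := by linarith
  exact le_ciSup hb (⟨x, hx⟩ : Icc (0:ℝ) 1)

lemma openPiece (p q : ℚ) :
    IsOpen {f : ↥(Hplus 0 1) | (p:ℝ) < q → 0 ≤ (p:ℝ) → (q:ℝ) ≤ 1 →
      ∃ x ∈ Icc (p:ℝ) (q:ℝ), (f : Equiv.Perm ℝ) x ≠ x} := by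
  by_cases hc : (p:ℝ) < q ∧ 0 ≤ (p:ℝ) ∧ (q:ℝ) ≤ 1
  · obtain ⟨hpq, hp0, hq1⟩ := hc
    rw [isOpen_iff_forall_mem_open]
    intro f hf
    obtain ⟨x, hxpq, hfx⟩ := hf hpq hp0 hq1
    have hx01 : x ∈ Icc (0:ℝ) 1 := ⟨le_trans hp0 hxpq.1, le_trans hxpq.2 hq1⟩
    set ε : ℝ := |(f : Equiv.Perm ℝ) x - x| with hε
    have hεpos : 0 < ε := abs_pos.mpr (sub_ne_zero.mpr hfx)
    refine ⟨{g : ↥(Hplus 0 1) |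
        unifDist (f : Equiv.Perm ℝ) (g : Equiv.Perm ℝ) < ε}, ?_, ?_, ?_⟩
    · intro g hg _ _ _
      refine ⟨x, hxpq, fun hgx => ?_⟩
      have h1 : |(f : Equiv.Perm ℝ) x - (g : Equiv.Perm ℝ) x| ≤
          unifDist (f : Equiv.Perm ℝ) (g : Equiv.Perm ℝ) :=
        abs_sub_le_unifDist f g hx01
      rw [hgx] at h1
      exact absurd (lt_of_le_of_lt h1 hg) (lt_irrefl ε)
    · exact TopologicalSpace.GenerateOpen.basic _ ⟨f, ε, hεpos, rfl⟩
    · show unifDist (f : Equiv.Perm ℝ) (f : Equiv.Perm ℝ) < ε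
      have : Nonempty (Icc (0:ℝ) 1) := ⟨⟨0, by norm_num⟩⟩
      have h0 : unifDist (f : Equiv.Perm ℝ) (f : Equiv.Perm ℝ) = 0 := by
        simp [unifDist]
      rw [h0]; exact hεpos
  · have : {f : ↥(Hplus 0 1) | (p:ℝ) < q → 0 ≤ (p:ℝ) → (q:ℝ) ≤ 1 →
        ∃ x ∈ Icc (p:ℝ) (q:ℝ), (f : Equiv.Perm ℝ) x ≠ x} = Set.univ := by
      apply Set.eq_univ_of_forall
      intro f h1 h2 h3
      exact absurd ⟨h1, h2, h3⟩ hc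
    rw [this]; exact isOpen_univ

/-- In `H₊([0,1])` with the topology of uniform convergence,
the set of homeomorphisms with totally disconnected fixed-point set is `G_δ`. -/
theorem totallyDisconnected_fixSet_Gδ_in_Hplus :
    IsGδ {f : ↥(Hplus 0 1) | IsTotallyDisconnected (fixSet (f : Equiv.Perm ℝ))} := by
  have key : {f : ↥(Hplus 0 1) | IsTotallyDisconnected (fixSet (f : Equiv.Perm ℝ))} =
      ⋂ pq : ℚ × ℚ, {f : ↥(Hplus 0 1) |
        ((pq.1 : ℝ) < pq.2) → 0 ≤ (pq.1:ℝ) → (pq.2:ℝ) ≤ 1 →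
        ∃ x ∈ Icc (pq.1:ℝ) (pq.2:ℝ), (f : Equiv.Perm ℝ) x ≠ x} := by
    ext f
    simp only [Set.mem_setOf_eq, Set.mem_iInter]
    constructor
    · rintro htd ⟨p, q⟩ hpq hp0 hq1
      by_contra hcon
      push_neg at hcon
      have hsub : Icc (p:ℝ) (q:ℝ) ⊆ fixSet (f : Equiv.Perm ℝ) := fun x hx =>
        ⟨⟨le_trans hp0 hx.1, le_trans hx.2 hq1⟩, hcon x hx⟩
      have := htd _ hsub isPreconnected_Icc
      have hpmem : (p:ℝ) ∈ Icc (p:ℝ) (q:ℝ) := ⟨le_refl _, le_of_lt hpq⟩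
      have hqmem : (q:ℝ) ∈ Icc (p:ℝ) (q:ℝ) := ⟨le_of_lt hpq, le_refl _⟩
      exact absurd (this hpmem hqmem) (ne_of_lt hpq)
    · intro h t hts htc
      intro x hx y hy
      by_contra hxy
      have key2 : ∀ a b : ℝ, a ∈ t → b ∈ t → a < b → False := by
        intro a b ha hb hab
        obtain ⟨p, hap, hpb⟩ := exists_rat_btwn hab
        obtain ⟨q, hpq, hqb⟩ := exists_rat_btwn hpb
        have ha' := hts ha
        have hb' := hts hb
        obtain ⟨z, hz, hfz⟩ := h (p, q) (by exact_mod_cast hpq)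
          (le_of_lt (lt_of_le_of_lt ha'.1.1 hap)) (le_of_lt (lt_of_lt_of_le hqb hb'.1.2))
        have hOrd : t.OrdConnected := htc.ordConnected
        have hzt : z ∈ t := hOrd.out ha hb
          ⟨le_trans (le_of_lt hap) hz.1, le_trans hz.2 (le_of_lt hqb)⟩
        exact hfz (hts hzt).2
      rcases Ne.lt_or_gt hxy with h' | h'
      · exact key2 x y hx hy h'
      · exact key2 y x hy hx h'
  rw [key]
  exact IsGδ.iInter fun pq => (openPiece pq.1 pq.2).isGδ
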